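/- Decomposition lemma: every finite tree t with dim(t) = 2m can be written as t = t'[t₁,...,tₙ] where dim(t') ≤ m and dim(tᵢ) ≤ m for all i. -/

import Mathlib

inductive RTree where
  | node : List RTree → RTree

/-- Dimension of a finite rooted tree: a leaf has dimension 0; a node with one
child has the dimension of that child; a node with at least two children has
dimension `d₁ + 1` if the two largest child dimensions `d₁ ≥ d₂` are equal,
and `d₁` otherwise. -/
def RTree.dim : RTree → ℕ
  | .node [] => 0
  | .node [t] => t.dim
  | .node ts =>
      let ds := ts.attach.map fun t => t.1.dim
      let d1 := ds.foldr max 0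
      let d2 := (ds.erase d1).foldr max 0
      if d1 = d2 then d1 + 1 else d1
decreasing_by
  · simp; omega
  · have := List.sizeOf_lt_of_mem t.2; simp at this ⊢; omega

mutual
/-- `Graft t' ts t` holds if `t` is obtained from `t'` by replacing its leaves,
in left-to-right order, by the trees in the list `ts` (i.e. `t = t'[t₁,…,tₙ]`). -/
inductive Graft : RTree → List RTree → RTree → Prop where
  | leaf (t : RTree) : Graft (.node []) [t] t
  | node {cs : List RTree} {ts : List RTree} {cs' : List RTree} :
      cs ≠ [] → GraftList cs ts cs' → Graft (.node cs) ts (.node cs')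

/-- Grafting performed on a list of trees, splitting the supply of attached trees. -/
inductive GraftList : List RTree → List RTree → List RTree → Prop where
  | nil : GraftList [] [] []
  | cons {c c' : RTree} {cs cs' : List RTree} {ts ts' : List RTree} :
      Graft c ts c' → GraftList cs ts' cs' → GraftList (c :: cs) (ts ++ ts') (c' :: cs')
end


/- ## list-level max machinery -/

def lmax (l : List ℕ) : ℕ := l.foldr max 0

def ldim (l : List ℕ) : ℕ :=
  if lmax l = lmax (l.erase (lmax l)) then lmax l + 1 else lmax l

lemma le_lmax {a : ℕ} : ∀ {l : List ℕ}, a ∈ l → a ≤ lmax l := by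
  intro l h
  induction l with
  | nil => simp at h
  | cons b l ih =>
    simp only [List.mem_cons] at h
    show a ≤ max b (lmax l)
    rcases h with rfl | h
    · exact le_max_left _ _
    · exact le_trans (ih h) (le_max_right _ _)

lemma lmax_le {b : ℕ} : ∀ {l : List ℕ}, (∀ a ∈ l, a ≤ b) → lmax l ≤ b := by
  intro l h
  induction l with
  | nil => exact Nat.zero_le _
  | cons c l ih =>
    show max c (lmax l) ≤ b
    exact max_le (h c (by simp)) (ih fun a ha => h a (by simp [ha]))

lemma lmax_mem : ∀ {l : List ℕ}, l ≠ [] → lmax l ∈ l := by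
  intro l h
  induction l with
  | nil => exact absurd rfl h
  | cons b l ih =>
    by_cases hl : l = []
    · subst hl; simp [lmax]
    · show max b (lmax l) ∈ b :: l
      rcases max_choice b (lmax l) with h' | h' <;> rw [h']
      · simp
      · exact List.mem_cons_of_mem _ (ih hl)

lemma lmax_erase_le {x : ℕ} {l : List ℕ} : lmax (l.erase x) ≤ lmax l :=
  lmax_le fun _ ha => le_lmax (List.mem_of_mem_erase ha)

lemma lmax_le_ldim (l : List ℕ) : lmax l ≤ ldim l := by
  unfold ldim; split <;> omega

lemma ldim_cases (l : List ℕ) : ldim l = lmax l ∨ ldim l = lmax l + 1 := by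
  unfold ldim; split
  · right; rfl
  · left; rfl

lemma pair_le_ldim {a b v : ℕ} {l : List ℕ} (h : List.Sublist [a, b] l)
    (ha : v ≤ a) (hb : v ≤ b) : v + 1 ≤ ldim l := by
  have hal : a ∈ l := h.subset (by simp)
  have hbe : ∃ c ∈ l.erase (lmax l), v ≤ c := by
    by_cases hA : a = lmax l
    · have hb' : b ∈ l.erase a := by
        by_cases hba : b = a
        · subst hba
          have h2 : 2 ≤ l.count b :=
            List.duplicate_iff_two_le_count.mp (List.duplicate_iff_sublist.mpr h)
          have h3 : (l.erase b).count b = l.count b - 1 := List.count_erase_self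
          have h4 : 0 < (l.erase b).count b := by omega
          exact List.count_pos_iff.mp h4
        · have hbl : b ∈ l := h.subset (by simp)
          exact (List.mem_erase_of_ne hba).mpr hbl
      exact ⟨b, hA ▸ hb', hb⟩
    · exact ⟨a, (List.mem_erase_of_ne hA).mpr hal, ha⟩
  obtain ⟨c, hc, hvc⟩ := hbe
  have h2 : v ≤ lmax (l.erase (lmax l)) := le_trans hvc (le_lmax hc)
  have h1 : v ≤ lmax l := le_trans ha (le_lmax hal)
  have h3 : lmax (l.erase (lmax l)) ≤ lmax l := lmax_erase_le
  unfold ldim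
  split
  · omega
  · next hne => omega

lemma forall₂_sublist {R : ℕ → ℕ → Prop} : ∀ {es ds : List ℕ}, List.Forall₂ R es ds →
    ∀ {xs : List ℕ}, List.Sublist xs es → ∃ ys, List.Sublist ys ds ∧ List.Forall₂ R xs ys := by
  intro es ds h
  induction h with
  | nil =>
    intro xs hxs
    rw [List.sublist_nil] at hxs; subst hxs
    exact ⟨[], by simp, .nil⟩
  | cons h1 h2 ih =>
    intro xs hxs
    rw [List.sublist_cons_iff] at hxs
    rcases hxs with hxs | ⟨r, rfl, hr⟩
    · obtain ⟨ys, hys, hf⟩ := ih hxs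
      exact ⟨ys, hys.trans (List.sublist_cons_self _ _), hf⟩
    · obtain ⟨ys, hys, hf⟩ := ih hr
      exact ⟨_ :: ys, hys.cons₂ _, .cons h1 hf⟩

lemma forall₂_mem {R : ℕ → ℕ → Prop} {es ds : List ℕ} {a : ℕ}
    (h : List.Forall₂ R es ds) (ha : a ∈ es) : ∃ b ∈ ds, R a b := by
  obtain ⟨ys, hys, hf⟩ := forall₂_sublist h (List.singleton_sublist.mpr ha)
  rcases hf with _ | ⟨h1, hf⟩
  rcases hf
  exact ⟨_, hys.subset (by simp), h1⟩

lemma core {m : ℕ} {es ds : List ℕ}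
    (h : List.Forall₂ (fun e d => e + m ≤ max d m) es ds)
    (hm : m < ldim ds) : ldim es + m ≤ ldim ds := by
  have hEle : ∀ e ∈ es, e + m ≤ max (lmax ds) m := by
    intro e he
    obtain ⟨d, hd, hr⟩ := forall₂_mem h he
    have h1 : max d m ≤ max (lmax ds) m := max_le_max (le_lmax hd) le_rfl
    omega
  have hEb : lmax es + m ≤ max (lmax ds) m := by
    by_cases hes : es = []
    · subst hes
      have := le_max_right (lmax ds) m
      simp only [lmax, List.foldr_nil]
      omega
    · exact hEle _ (lmax_mem hes)
  have hDle : lmax ds ≤ ldim ds := lmax_le_ldim ds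
  rcases ldim_cases es with hE | hE
  · rw [hE]
    have : max (lmax ds) m ≤ ldim ds := max_le hDle (le_of_lt hm)
    omega
  · rw [hE]
    by_cases hE10 : lmax es = 0
    · omega
    · have heq : lmax es = lmax (es.erase (lmax es)) := by
        by_contra hne
        unfold ldim at hE
        rw [if_neg hne] at hE
        omega
      have hmem2 : lmax es ∈ es.erase (lmax es) := by
        have hne2 : es.erase (lmax es) ≠ [] := by
          intro h0
          rw [h0] at heq
          simp only [lmax, List.foldr_nil] at heq
          exact hE10 heq
        have := lmax_mem hne2
        rw [← heq] at this
        exact this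
      have hdup : List.Sublist [lmax es, lmax es] es := by
        apply List.duplicate_iff_sublist.mp
        apply List.duplicate_iff_two_le_count.mpr
        have h3 : (es.erase (lmax es)).count (lmax es) = es.count (lmax es) - 1 := List.count_erase_self
        have h4 : 0 < (es.erase (lmax es)).count (lmax es) :=
          List.count_pos_iff.mpr hmem2
        omega
      obtain ⟨ys, hys, hf⟩ := forall₂_sublist h hdup
      rcases hf with _ | @⟨_, d, _, _, hr1, hf⟩
      rcases hf with _ | @⟨_, d', _, _, hr2, hf⟩
      rcases hf
      have hd1 : lmax es + m ≤ d := by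
        rcases Nat.le_total d m with h' | h'
        · rw [max_eq_right h'] at hr1; omega
        · rw [max_eq_left h'] at hr1; omega
      have hd2 : lmax es + m ≤ d' := by
        rcases Nat.le_total d' m with h' | h'
        · rw [max_eq_right h'] at hr2; omega
        · rw [max_eq_left h'] at hr2; omega
      have := pair_le_ldim hys hd1 hd2
      omega

/- ## bridges -/

lemma dim_nil : RTree.dim (.node []) = 0 := by rw [RTree.dim]

lemma dim_single (c : RTree) : RTree.dim (.node [c]) = c.dim := by rw [RTree.dim]

lemma dim_pair (a b : RTree) (l : List RTree) :
    RTree.dim (.node (a :: b :: l)) = ldim ((a :: b :: l).map RTree.dim) := by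
  rw [RTree.dim]
  · simp [ldim, lmax]
  · simp
  · simp

lemma f2_map {m : ℕ} : ∀ {cs' cs : List RTree},
    List.Forall₂ (fun c' c => c'.dim + m ≤ max c.dim m) cs' cs →
    List.Forall₂ (fun e d => e + m ≤ max d m) (cs'.map RTree.dim) (cs.map RTree.dim) := by
  intro cs' cs h
  induction h with
  | nil => exact .nil
  | cons h1 h2 ih => exact .cons h1 ih

lemma aux (m : ℕ) : ∀ (n : ℕ) (t : RTree), sizeOf t ≤ n →
    ∃ t' ts, Graft t' ts t ∧ t'.dim + m ≤ max t.dim m ∧ ∀ u ∈ ts, u.dim ≤ m := by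
  intro n
  induction n with
  | zero =>
    intro t h
    cases t with | node cs => simp at h
  | succ n ih =>
    intro t hst
    by_cases hle : t.dim ≤ m
    · refine ⟨.node [], [t], Graft.leaf t, ?_, ?_⟩
      · rw [dim_nil]
        have := le_max_right t.dim m
        omega
      · intro u hu
        simp only [List.mem_singleton] at hu
        subst hu; exact hle
    · cases t with | node cs =>
      have hchild : ∀ c ∈ cs, sizeOf c ≤ n := by
        intro c hc
        have h1 := List.sizeOf_lt_of_mem hc
        have h2 : sizeOf (RTree.node cs) = 1 + sizeOf cs := by simp
        omega
      have inner : ∀ l : List RTree, (∀ c ∈ l, c ∈ cs) →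
          ∃ cs' ts, GraftList cs' ts l ∧
            List.Forall₂ (fun c' c => c'.dim + m ≤ max c.dim m) cs' l ∧
            ∀ u ∈ ts, u.dim ≤ m := by
        intro l
        induction l with
        | nil => exact fun _ => ⟨[], [], .nil, .nil, by simp⟩
        | cons c l ihl =>
          intro hsub
          obtain ⟨cs', ts', hg, hf, hts⟩ := ihl fun x hx => hsub x (List.mem_cons_of_mem _ hx)
          obtain ⟨c', ts, hgc, hdc, htc⟩ := ih c (hchild c (hsub c List.mem_cons_self))
          refine ⟨c' :: cs', ts ++ ts', .cons hgc hg, .cons hdc hf, ?_⟩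
          intro u hu
          rcases List.mem_append.mp hu with h | h
          exacts [htc u h, hts u h]
      obtain ⟨cs', ts, hg, hf, hts⟩ := inner cs (fun _ h => h)
      have hne : cs' ≠ [] := by
        rintro rfl
        cases hf
        exact hle (by rw [dim_nil]; exact Nat.zero_le m)
      refine ⟨.node cs', ts, Graft.node hne hg, ?_, hts⟩
      rcases hf with _ | @⟨a', a, _, _, h1, hf2⟩
      · exact absurd rfl hne
      · rcases hf2 with _ | @⟨b', b, l', l, h2, hf3⟩
        · rw [dim_single, dim_single]
          exact h1
        · 
          have hmlt : m < ldim (List.map RTree.dim (a :: b :: l)) := by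
            rw [← dim_pair]
            omega
          rw [dim_pair, dim_pair, max_eq_left (le_of_lt hmlt)]
          exact core (f2_map (.cons h1 (.cons h2 hf3))) hmlt

/-- Decomposition lemma: every finite tree `t` with `dim t = 2m` can be written
as `t = t'[t₁,…,tₙ]` where `dim t' ≤ m` and `dim tᵢ ≤ m` for all `i`. -/
theorem tree_decomposition (t : RTree) (m : ℕ) (h : t.dim = 2 * m) :
    ∃ (t' : RTree) (ts : List RTree),
      Graft t' ts t ∧ t'.dim ≤ m ∧ ∀ u ∈ ts, u.dim ≤ m := by
  obtain ⟨t', ts, hg, hd, hts⟩ := aux m (sizeOf t) t le_rfl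
  refine ⟨t', ts, hg, ?_, hts⟩
  rw [h, max_eq_left (by omega : m ≤ 2 * m)] at hd
  omega
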